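/- Let G be a simple graph whose vertex set is the disjoint union of V(P₁) and V(P₂), where P₁ and P₂ are vertex-disjoint paths of G. Let a₁, a₂ be distinct vertices of P₁ with a₁ occurring before a₂ along P₁, and let b₁, b₂ be distinct vertices of P₂ with b₁ occurring before b₂ along P₂, such that a₁b₁ ∈ E(G) and a₂b₂ ∈ E(G). If the subpaths P₁[a₁,a₂] and P₂[b₁,b₂] have orders (numbers of vertices) of the same parity, then the prism over G is Hamiltonian, i.e. G □ K₂ has a Hamiltonian cycle. -/

import Mathlib

set_option linter.unusedSectionVars false
set_option maxHeartbeats 1000000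


open SimpleGraph
open Fin.CommRing

attribute [-instance] instBEqProd

section Aux
variable {V : Type*} [DecidableEq V] {G : SimpleGraph V} {u v w : V}

private lemma aux_isHamCycle {W : Type*} [DecidableEq W] {H : SimpleGraph W} {a : W}
    (p : H.Walk a a) (hlen : 3 ≤ p.length)
    (hc : ∀ z, p.support.tail.count z = 1) : p.IsHamiltonianCycle := by
  have hnn : ¬ p.Nil := by rw [Walk.not_nil_iff_lt_length]; omega
  have htn : p.support.tail.Nodup := List.nodup_iff_count_le_one.2 fun z => (hc z).le
  obtain ⟨b, h, q, rfl⟩ := Walk.not_nil_iff.1 hnn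
  have hqs : q.support = (Walk.cons h q).support.tail := by simp
  have hqn : q.support.Nodup := hqs ▸ htn
  have hqp : q.IsPath := Walk.IsPath.mk' hqn
  have hql : 2 ≤ q.length := by simp at hlen ⊢; omega
  have hnotmem : s(a, b) ∉ q.edges := by
    intro hmem
    rcases q with _ | ⟨h', q'⟩
    · simp at hmem
    · rename_i c _
      simp only [Walk.edges_cons, List.mem_cons] at hmem
      rcases hmem with heq | hmem
      · rw [Sym2.eq_iff] at heq
        rcases heq with ⟨rfl, rfl⟩ | ⟨rfl, -⟩
        · exact absurd rfl h.ne
        · have : q'.IsPath := hqp.of_cons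
          rw [Walk.isPath_iff_eq_nil] at this
          subst this
          simp at hql
      · have hb : b ∈ q'.support := Walk.snd_mem_support_of_mem_edges _ hmem
        simp only [Walk.support_cons, List.nodup_cons] at hqn
        exact hqn.1 hb
  have htrail : (Walk.cons h q).IsTrail := by
    constructor
    rw [Walk.edges_cons]
    exact List.Nodup.cons hnotmem hqp.isTrail.edges_nodup
  refine ⟨⟨⟨htrail, by simp⟩, htn⟩, ?_⟩
  intro z
  rw [Walk.support_tail_of_not_nil _ hnn]
  exact hc z

private lemma tail_count_append {W : Type*} [DecidableEq W] {H : SimpleGraph W} {a b c : W}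
    (p : H.Walk a b) (q : H.Walk b c) (z : W) :
    (p.append q).support.tail.count z = p.support.tail.count z + q.support.tail.count z := by
  rw [Walk.support_append]
  conv_lhs => rw [p.support_eq_cons]
  rw [List.cons_append, List.tail_cons, List.count_append]

private lemma tail_count_cons {W : Type*} [DecidableEq W] {H : SimpleGraph W} {a b c : W}
    (h : H.Adj a b) (q : H.Walk b c) (z : W) :
    (Walk.cons h q).support.tail.count z = q.support.count z := by simp

private lemma pbeq (z w : V × Fin 2) : (z == w) = decide (z = w) := rfl

private lemma count_map_pair (l : List V) (ε : Fin 2) (x : V) (δ : Fin 2) :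
    @List.count (V × Fin 2) instBEqOfDecidableEq (x, δ) (l.map (·, ε))
      = if δ = ε then l.count x else 0 := by
  induction l with
  | nil => simp
  | cons a l ih =>
    simp only [List.map_cons, List.count_cons, ih, pbeq, decide_eq_true_eq]
    rcases eq_or_ne δ ε with rfl | hδ
    · simp [pbeq, decide_eq_true_eq, Prod.ext_iff]
    · have hne : ¬((a, ε) = (x, δ)) := fun h => hδ ((congrArg Prod.snd h).symm)
      simp [pbeq, decide_eq_true_eq, hδ, hne]

private def liftHom (G : SimpleGraph V) (ε : Fin 2) : G →g (G □ (⊤ : SimpleGraph (Fin 2))) where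
  toFun v := (v, ε)
  map_rel' h := Or.inl ⟨h, rfl⟩

private def liftW (ε : Fin 2) (w : G.Walk u v) :
    (G □ (⊤ : SimpleGraph (Fin 2))).Walk (u, ε) (v, ε) := w.map (liftHom G ε)

private lemma support_liftW (ε : Fin 2) (w : G.Walk u v) :
    (liftW ε w).support = w.support.map (·, ε) := by
  exact Walk.support_map (liftHom G ε) w

private def rungA (v : V) (ε : Fin 2) : (G □ (⊤ : SimpleGraph (Fin 2))).Adj (v, ε) (v, ε + 1) :=
  Or.inr ⟨(top_adj _ _).2 (show ε ≠ ε + 1 by omega), rfl⟩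

private def edgeLA {u v : V} (h : G.Adj u v) (ε : Fin 2) :
    (G □ (⊤ : SimpleGraph (Fin 2))).Adj (u, ε) (v, ε) := Or.inl ⟨h, rfl⟩

private def ladder (w : G.Walk u v) (ε : Fin 2) :
    (G □ (⊤ : SimpleGraph (Fin 2))).Walk (u, ε) (u, ε + 1) :=
  (liftW ε w).append (Walk.cons (rungA v ε) (liftW (ε + 1) w.reverse))

private lemma support_ladder (w : G.Walk u v) (ε : Fin 2) :
    (ladder w ε).support
      = w.support.map (·, ε) ++ (w.reverse.support.map (·, ε + 1)) := by
  rw [ladder, Walk.support_append, support_liftW]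
  congr 1
  rw [Walk.support_cons, List.tail_cons, support_liftW]

private lemma tail_count_ladder (w : G.Walk u v) (ε : Fin 2) (x : V) (δ : Fin 2) :
    @List.count (V × Fin 2) instBEqOfDecidableEq (x, δ) (ladder w ε).support.tail
      = (if δ = ε then w.support.tail.count x else 0)
        + (if δ = ε + 1 then w.support.count x else 0) := by
  rw [support_ladder, w.support_eq_cons, List.map_cons, List.cons_append, List.tail_cons,
    List.count_append, count_map_pair, count_map_pair, Walk.support_reverse, List.count_reverse,
    ← w.support_eq_cons]

private lemma count_support_ladder (w : G.Walk u v) (ε : Fin 2) (x : V) (δ : Fin 2) :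
    @List.count (V × Fin 2) instBEqOfDecidableEq (x, δ) (ladder w ε).support
      = w.support.count x := by
  rw [support_ladder, List.count_append, count_map_pair, count_map_pair,
    Walk.support_reverse, List.count_reverse]
  rcases (by omega : δ = ε ∨ δ = ε + 1) with h | h
  · rw [if_pos h, if_neg (by omega), add_zero]
  · rw [if_neg (by omega), if_pos h, zero_add]

private def zag : {u v : V} → (M : G.Walk u v) → (ε : Fin 2) →
    (G □ (⊤ : SimpleGraph (Fin 2))).Walk (u, ε) (v, ε + (M.length : Fin 2))
  | _, _, Walk.nil, ε => Walk.nil.copy rfl (by simp)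
  | _, _, Walk.cons h M, ε =>
    (Walk.cons (rungA _ ε) (Walk.cons (edgeLA h (ε + 1)) (zag M (ε + 1)))).copy rfl
      (by rw [Walk.length_cons]; exact Prod.ext rfl (by push_cast; ring))

private lemma support_zag_cons {u v w : V} (h : G.Adj u v) (M : G.Walk v w) (ε : Fin 2) :
    (zag (Walk.cons h M) ε).support
      = (u, ε) :: (u, ε + 1) :: (zag M (ε + 1)).support := by
  rw [zag, Walk.support_copy]; simp

private lemma count_support_zag {u v : V} (M : G.Walk u v) (hM : M.support.Nodup) (ε : Fin 2)
    (x : V) (δ : Fin 2) :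
    @List.count (V × Fin 2) instBEqOfDecidableEq (x, δ) (zag M ε).support
      = if x = v then (if δ = ε + (M.length : Fin 2) then 1 else 0) else M.support.count x := by
  induction M generalizing ε with
  | nil =>
    rename_i a
    have hs : (zag (Walk.nil : G.Walk a a) ε).support = [(a, ε)] := by
      rw [zag, Walk.support_copy]; simp
    rw [hs]
    simp only [Walk.length_nil, Nat.cast_zero, add_zero, Walk.support_nil,
      List.count_cons, List.count_nil, pbeq, decide_eq_true_eq, Prod.mk.injEq, zero_add]
    rcases eq_or_ne x a with rfl | hx
    · simp only [pbeq, decide_eq_true_eq, if_pos rfl, true_and, eq_comm (a := ε), if_true, Prod.mk.injEq]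
    · have hxa : ¬(a = x) := fun e => hx e.symm
      simp [pbeq, decide_eq_true_eq, hxa, hx]
  | cons h M ih =>
    rename_i a b c
    simp only [Walk.support_cons, List.nodup_cons] at hM
    obtain ⟨hu, hM'⟩ := hM
    have huw : a ≠ c := fun e => hu (e ▸ M.end_mem_support)
    rw [support_zag_cons, List.count_cons, List.count_cons, ih hM' (ε + 1)]
    have hlen : ε + 1 + (M.length : Fin 2) = ε + ((Walk.cons h M).length : Fin 2) := by
      rw [Walk.length_cons]; push_cast; ring
    rcases eq_or_ne x a with rfl | hx
    · have hcnt : M.support.count x = 0 := List.count_eq_zero.2 hu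
      simp only [if_neg huw, hcnt, Walk.support_cons, List.count_cons, pbeq, decide_eq_true_eq,
        beq_iff_eq, Prod.mk.injEq, if_pos rfl, true_and, zero_add, List.count_eq_zero.2 hu]
      split_ifs <;> omega
    · have hxa : ¬(a = x) := fun e => hx e.symm
      simp only [pbeq, decide_eq_true_eq, beq_iff_eq, Prod.mk.injEq, hxa, false_and, if_false,
        add_zero, Walk.support_cons, List.count_cons, if_neg hxa, hlen]

private lemma count_support_head (w : G.Walk u v) (x : V) :
    w.support.count x = w.support.tail.count x + (if x = u then 1 else 0) := by
  conv_lhs => rw [w.support_eq_cons]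
  rcases eq_or_ne x u with rfl | h
  · rw [List.count_cons]; simp
  · have h' : ¬(u = x) := fun e => h e.symm
    rw [List.count_cons]; simp [h, h']

private lemma length_takeUntil_eq (p : G.Walk v w) (u : V) (h : u ∈ p.support) :
    (p.takeUntil u h).length = p.support.idxOf u := by
  induction p with
  | nil =>
    rename_i a
    have h0 : (Walk.nil.takeUntil u h).length = 0 :=
      Nat.le_zero.mp ((Walk.length_takeUntil_le _ h).trans (by simp))
    have hu : u = a := by simpa using h
    subst hu
    rw [h0, Walk.support_nil, List.idxOf_cons_self]
  | cons hadj p ih =>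
    rename_i a b c
    rw [Walk.takeUntil]
    split_ifs with hx
    · subst hx
      simp [List.idxOf_cons_self]
    · rw [Walk.length_cons, Walk.support_cons, List.idxOf_cons_ne _ hx, ih]

private theorem aux_main {V : Type*} [Fintype V] [DecidableEq V] (G : SimpleGraph V)
    {a₁ c₁ a₂ b₂ d₁ b₁ sa ta tb sb : V}
    (R₁ : G.Walk a₁ sa) (M₁ : G.Walk c₁ a₂) (T₁ : G.Walk a₂ ta)
    (T₂ : G.Walk b₂ tb) (M₂ : G.Walk d₁ b₁) (R₂ : G.Walk b₁ sb)
    (h₁ : G.Adj a₁ c₁) (hab₂ : G.Adj a₂ b₂) (h₂ : G.Adj b₂ d₁) (hba : G.Adj b₁ a₁)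
    (hnd₁ : M₁.support.Nodup) (hnd₂ : M₂.support.Nodup)
    (hne12 : a₁ ≠ a₂) (hne1b1 : a₁ ≠ b₁) (hne1b2 : a₁ ≠ b₂)
    (hne2b1 : a₂ ≠ b₁) (hne2b2 : a₂ ≠ b₂) (hneb : b₁ ≠ b₂)
    (hpar : (M₁.length + M₂.length) % 2 = 0)
    (hsum : ∀ x : V,
      R₁.support.count x + M₁.support.count x + T₁.support.tail.count x
        + R₂.support.count x + M₂.support.count x + T₂.support.tail.count x
        + (if x = b₂ then 1 else 0)
      = 1 + (if x = b₁ then 1 else 0)) :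
    (G □ (⊤ : SimpleGraph (Fin 2))).IsHamiltonian := by
  intro _
  have hX : ((a₁, 0 + 1 + (M₁.length : Fin 2) + 1 + 1 + (M₂.length : Fin 2) + 1) : V × Fin 2)
      = (a₁, 0) := by
    refine Prod.ext rfl ?_
    show 0 + 1 + (M₁.length : Fin 2) + 1 + 1 + (M₂.length : Fin 2) + 1 = 0
    have hc : ((M₁.length + M₂.length : ℕ) : Fin 2) = 0 := by
      rw [Fin.natCast_eq_zero]; omega
    rw [Nat.cast_add] at hc
    calc 0 + 1 + (M₁.length : Fin 2) + 1 + 1 + (M₂.length : Fin 2) + 1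
        = ((M₁.length : Fin 2) + (M₂.length : Fin 2)) + 4 := by ring
      _ = 0 := by rw [hc]; decide
  refine ⟨(a₁, 0), ?_⟩
  refine ⟨((ladder R₁ 0).append
    ((Walk.cons (edgeLA h₁ (0 + 1)) (zag M₁ (0 + 1))).append
    ((ladder T₁ (0 + 1 + (M₁.length : Fin 2))).append
    ((Walk.cons (edgeLA hab₂ (0 + 1 + (M₁.length : Fin 2) + 1))
        (ladder T₂ (0 + 1 + (M₁.length : Fin 2) + 1))).append
    ((Walk.cons (edgeLA h₂ (0 + 1 + (M₁.length : Fin 2) + 1 + 1))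
        (zag M₂ (0 + 1 + (M₁.length : Fin 2) + 1 + 1))).append
    ((ladder R₂ (0 + 1 + (M₁.length : Fin 2) + 1 + 1 + (M₂.length : Fin 2))).append
    (Walk.cons (edgeLA hba (0 + 1 + (M₁.length : Fin 2) + 1 + 1 + (M₂.length : Fin 2) + 1))
        Walk.nil))))))).copy rfl hX, ?_⟩
  apply aux_isHamCycle
  · rw [Walk.length_copy]
    simp only [Walk.length_append, Walk.length_cons]
    omega
  · rintro ⟨x, δ⟩
    rw [Walk.support_copy]
    rw [tail_count_append, tail_count_append, tail_count_append, tail_count_append,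
      tail_count_append, tail_count_append]
    rw [tail_count_ladder, tail_count_cons, tail_count_ladder, tail_count_cons,
      tail_count_cons, tail_count_ladder, tail_count_cons]
    rw [count_support_zag M₁ hnd₁, count_support_ladder, count_support_zag M₂ hnd₂]
    simp only [Walk.support_nil, List.count_cons, List.count_nil, pbeq, decide_eq_true_eq,
      Prod.mk.injEq, zero_add]
    have hsx := hsum x
    have q1 := count_support_head R₁ x
    have q2 := count_support_head T₁ x
    have q3 := count_support_head T₂ x
    have q4 := count_support_head R₂ x
    have p1 : 0 < R₁.support.count a₁ := List.count_pos_iff.2 R₁.start_mem_support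
    have p2 : 0 < M₁.support.count a₂ := List.count_pos_iff.2 M₁.end_mem_support
    have p3 : 0 < M₂.support.count b₁ := List.count_pos_iff.2 M₂.end_mem_support
    have p4 : 0 < R₂.support.count b₁ := List.count_pos_iff.2 R₂.start_mem_support
    have hb1 : M₁.support.count x ≤ 1 := List.nodup_iff_count_le_one.1 hnd₁ x
    have hb2 : M₂.support.count x ≤ 1 := List.nodup_iff_count_le_one.1 hnd₂ x
    obtain ⟨μ, hμ⟩ : ∃ μ, (M₁.length : Fin 2) = μ := ⟨_, rfl⟩
    obtain ⟨ν, hν⟩ : ∃ ν, (M₂.length : Fin 2) = ν := ⟨_, rfl⟩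
    have hμν : μ + ν = 0 := by
      rw [← hμ, ← hν, ← Nat.cast_add, Fin.natCast_eq_zero]; omega
    rw [hμ, hν]
    clear hμ hν hpar hX
    have hνμ : ν = μ := by omega
    subst hνμ
    rcases eq_or_ne x a₁ with rfl | hx1
    · simp only [hne12, hne1b1, hne1b2, eq_self_iff_true, if_true, true_and, if_false]
        at hsx q1 q2 q3 q4 ⊢
      rcases (by omega : ν = 0 ∨ ν = 1) with rfl | rfl <;>
        rcases (by omega : δ = 0 ∨ δ = 1) with rfl | rfl <;>
        simp only [Fin.isValue, Fin.reduceAdd, Fin.reduceEq, if_true, if_false, reduceIte] <;>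
        omega
    rcases eq_or_ne x a₂ with rfl | hx2
    · simp only [hne12, Ne.symm hne12, hne2b1, hne2b2, eq_self_iff_true, if_true, true_and,
        false_and, if_false] at hsx q1 q2 q3 q4 ⊢
      rcases (by omega : ν = 0 ∨ ν = 1) with rfl | rfl <;>
        rcases (by omega : δ = 0 ∨ δ = 1) with rfl | rfl <;>
        simp only [Fin.isValue, Fin.reduceAdd, Fin.reduceEq, if_true, if_false, reduceIte] <;>
        omega
    rcases eq_or_ne x b₁ with rfl | hx3
    · simp only [hne1b1, Ne.symm hne1b1, Ne.symm hne2b1, hneb, eq_self_iff_true, if_true,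
        true_and, false_and, if_false] at *
      split_ifs at * <;> omega
    rcases eq_or_ne x b₂ with rfl | hx4
    · simp only [hne1b2, Ne.symm hne1b2, Ne.symm hne2b2, Ne.symm hneb, eq_self_iff_true,
        if_true, true_and, false_and, if_false] at *
      split_ifs at * <;> omega
    · simp only [hx1, Ne.symm hx1, hx2, hx3, hx4, eq_self_iff_true, if_true, true_and,
        false_and, if_false] at hsx q1 q2 q3 q4 ⊢
      rcases (by omega : ν = 0 ∨ ν = 1) with rfl | rfl <;>
        rcases (by omega : δ = 0 ∨ δ = 1) with rfl | rfl <;>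
        simp only [Fin.isValue, Fin.reduceAdd, Fin.reduceEq, if_true, if_false, reduceIte] <;>
        omega
end Aux
section C
variable {V : Type*} [DecidableEq V] {G : SimpleGraph V} {s t : V}

private lemma count_cons_eq (a x : V) (l : List V) :
    (a :: l).count x = l.count x + (if x = a then 1 else 0) := by
  rcases eq_or_ne x a with rfl | h
  · simp [List.count_cons]
  · have h' : ¬(a = x) := fun e => h e.symm
    simp [List.count_cons, h, h']

private lemma mem_dropUntil_and_length (P : G.Walk s t) {x y : V}
    (hx : x ∈ P.support) (hy : y ∈ P.support)
    (hlt : P.support.idxOf x < P.support.idxOf y) :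
    ∃ h : y ∈ (P.dropUntil x hx).support,
      ((P.dropUntil x hx).takeUntil y h).length
         = P.support.idxOf y - P.support.idxOf x := by
  have hxy : x ≠ y := by intro e; rw [e] at hlt; omega
  have hsup : P.support = (P.takeUntil x hx).support ++ (P.dropUntil x hx).support.tail := by
    conv_lhs => rw [← P.take_spec hx]
    rw [Walk.support_append]
  have hlenS : (P.takeUntil x hx).support.length = P.support.idxOf x + 1 := by
    rw [Walk.length_support, length_takeUntil_eq]
  have hnotmem : y ∉ (P.takeUntil x hx).support := by
    intro hmem
    have h1 : P.support.idxOf y = (P.takeUntil x hx).support.idxOf y := by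
      rw [hsup]; exact List.idxOf_append_of_mem hmem
    have h2 : (P.takeUntil x hx).support.idxOf y < (P.takeUntil x hx).support.length :=
      List.idxOf_lt_length_iff.2 hmem
    omega
  have hmem' : y ∈ (P.dropUntil x hx).support.tail := by
    rcases List.mem_append.1 (by rw [← hsup]; exact hy) with h | h
    · exact absurd h hnotmem
    · exact h
  refine ⟨List.mem_of_mem_tail hmem', ?_⟩
  rw [length_takeUntil_eq]
  have hidxP : P.support.idxOf y
      = (P.takeUntil x hx).support.length + (P.dropUntil x hx).support.tail.idxOf y := by
    rw [hsup]; exact List.idxOf_append_of_notMem hnotmem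
  have hD : (P.dropUntil x hx).support.idxOf y
      = (P.dropUntil x hx).support.tail.idxOf y + 1 := by
    conv_lhs => rw [(P.dropUntil x hx).support_eq_cons]
    rw [List.idxOf_cons_ne _ hxy]
  omega
end C

/-- Suppose the vertex set of `G` is the disjoint union of two vertex-disjoint paths
`P₁` and `P₂`, with vertices `a₁` before `a₂` on `P₁` and `b₁` before `b₂` on `P₂`
(positions along a path are measured by `List.indexOf` in its support),
such that `a₁b₁, a₂b₂ ∈ E(G)`.  If the subpaths `P₁[a₁,a₂]` and `P₂[b₁,b₂]` have orders
of the same parity (equivalently, the index differences have the same parity), then the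
prism `G □ K₂` is Hamiltonian. -/
theorem prism_hamiltonian_of_same_parity {V : Type*} [Fintype V] [DecidableEq V]
    (G : SimpleGraph V) {s₁ t₁ s₂ t₂ : V}
    (P₁ : G.Walk s₁ t₁) (P₂ : G.Walk s₂ t₂) (hP₁ : P₁.IsPath) (hP₂ : P₂.IsPath)
    (hdisj : ∀ x, x ∈ P₁.support → x ∉ P₂.support)
    (hcover : ∀ x : V, x ∈ P₁.support ∨ x ∈ P₂.support)
    (a₁ a₂ b₁ b₂ : V)
    (ha₁ : a₁ ∈ P₁.support) (ha₂ : a₂ ∈ P₁.support)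
    (hb₁ : b₁ ∈ P₂.support) (hb₂ : b₂ ∈ P₂.support)
    (ha : P₁.support.idxOf a₁ < P₁.support.idxOf a₂)
    (hb : P₂.support.idxOf b₁ < P₂.support.idxOf b₂)
    (hab₁ : G.Adj a₁ b₁) (hab₂ : G.Adj a₂ b₂)
    (hpar : (P₁.support.idxOf a₂ - P₁.support.idxOf a₁ + 1) % 2
          = (P₂.support.idxOf b₂ - P₂.support.idxOf b₁ + 1) % 2) :
    (G □ (⊤ : SimpleGraph (Fin 2))).IsHamiltonian := by
  -- distinctness
  have hne12 : a₁ ≠ a₂ := by intro e; rw [e] at ha; omega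
  have hneb12 : b₁ ≠ b₂ := by intro e; rw [e] at hb; omega
  have hne1b1 : a₁ ≠ b₁ := fun e => (hdisj a₁ ha₁) (e ▸ hb₁)
  have hne1b2 : a₁ ≠ b₂ := fun e => (hdisj a₁ ha₁) (e ▸ hb₂)
  have hne2b1 : a₂ ≠ b₁ := fun e => (hdisj a₂ ha₂) (e ▸ hb₁)
  have hne2b2 : a₂ ≠ b₂ := fun e => (hdisj a₂ ha₂) (e ▸ hb₂)
  -- split the two paths
  obtain ⟨hm₁, hlen₁⟩ := mem_dropUntil_and_length P₁ ha₁ ha₂ ha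
  obtain ⟨hm₂, hlen₂⟩ := mem_dropUntil_and_length P₂ hb₁ hb₂ hb
  set S₁ := P₁.takeUntil a₁ ha₁ with hS₁def
  set D₁ := P₁.dropUntil a₁ ha₁ with hD₁def
  set M₁ := D₁.takeUntil a₂ hm₁ with hM₁def
  set T₁ := D₁.dropUntil a₂ hm₁ with hT₁def
  set S₂ := P₂.takeUntil b₁ hb₁ with hS₂def
  set D₂ := P₂.dropUntil b₁ hb₁ with hD₂def
  set M₂ := D₂.takeUntil b₂ hm₂ with hM₂def
  set T₂ := D₂.dropUntil b₂ hm₂ with hT₂def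
  have hD₁p : D₁.IsPath := hP₁.dropUntil ha₁
  have hD₂p : D₂.IsPath := hP₂.dropUntil hb₁
  have hM₁p : M₁.IsPath := hD₁p.takeUntil hm₁
  have hM₂p : M₂.IsPath := hD₂p.takeUntil hm₂
  obtain ⟨c₁, h₁adj, M₁c, hM₁eq⟩ := Walk.exists_eq_cons_of_ne hne12 M₁
  obtain ⟨d₁, h₂adj, M₂c, hM₂eq⟩ := Walk.exists_eq_cons_of_ne hneb12.symm M₂.reverse
  -- support decompositions
  have hsup₁ : P₁.support = S₁.support ++ D₁.support.tail := by
    conv_lhs => rw [← P₁.take_spec ha₁]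
    rw [Walk.support_append]
  have hsupD₁ : D₁.support = M₁.support ++ T₁.support.tail := by
    conv_lhs => rw [← D₁.take_spec hm₁]
    rw [Walk.support_append]
  have hsup₂ : P₂.support = S₂.support ++ D₂.support.tail := by
    conv_lhs => rw [← P₂.take_spec hb₁]
    rw [Walk.support_append]
  have hsupD₂ : D₂.support = M₂.support ++ T₂.support.tail := by
    conv_lhs => rw [← D₂.take_spec hm₂]
    rw [Walk.support_append]
  have htail₁ : D₁.support.tail = M₁c.support ++ T₁.support.tail := by
    rw [hsupD₁, hM₁eq, Walk.support_cons, List.cons_append, List.tail_cons]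
  -- nodup pieces
  have hnd₁ : M₁c.support.Nodup := by
    have := hM₁p.support_nodup
    rw [hM₁eq, Walk.support_cons, List.nodup_cons] at this
    exact this.2
  have hnd₂ : M₂c.support.Nodup := by
    have := hM₂p.reverse.support_nodup
    rw [hM₂eq, Walk.support_cons, List.nodup_cons] at this
    exact this.2
  -- lengths
  have hl1 : M₁.length = M₁c.length + 1 := by rw [hM₁eq, Walk.length_cons]
  have hl2 : M₂.length = M₂c.length + 1 := by
    rw [← Walk.length_reverse, hM₂eq, Walk.length_cons]
  -- apply the main construction
  apply aux_main G S₁.reverse M₁c T₁ T₂ M₂c S₂.reverse h₁adj hab₂ h₂adj hab₁.symm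
    hnd₁ hnd₂ hne12 hne1b1 hne1b2 hne2b1 hne2b2 hneb12
  · omega
  · -- the counting identity
    intro x
    have e0 : S₁.reverse.support.count x = S₁.support.count x := by
      rw [Walk.support_reverse, List.count_reverse]
    have e0' : S₂.reverse.support.count x = S₂.support.count x := by
      rw [Walk.support_reverse, List.count_reverse]
    have e1 : P₁.support.count x = S₁.support.count x + D₁.support.tail.count x := by
      rw [hsup₁, List.count_append]
    have e2 : D₁.support.tail.count x = M₁c.support.count x + T₁.support.tail.count x := by
      rw [htail₁, List.count_append]
    have e3 : P₂.support.count x = S₂.support.count x + D₂.support.tail.count x := by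
      rw [hsup₂, List.count_append]
    have e4 : D₂.support.tail.count x
        = M₂.support.tail.count x + T₂.support.tail.count x := by
      rw [hsupD₂]
      conv_lhs => rw [M₂.support_eq_cons]
      rw [List.cons_append, List.tail_cons, List.count_append]
    have e5 : M₂.support.count x = M₂.support.tail.count x + (if x = b₁ then 1 else 0) :=
      count_support_head M₂ x
    have e6 : M₂.support.count x = M₂c.support.count x + (if x = b₂ then 1 else 0) := by
      rw [← List.count_reverse, ← Walk.support_reverse, hM₂eq, Walk.support_cons,
        count_cons_eq]
    have hc1 : P₁.support.count x ≤ 1 := List.nodup_iff_count_le_one.1 hP₁.support_nodup x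
    have hc2 : P₂.support.count x ≤ 1 := List.nodup_iff_count_le_one.1 hP₂.support_nodup x
    have hcv : 1 ≤ P₁.support.count x + P₂.support.count x := by
      rcases hcover x with h | h
      · have := List.count_pos_iff.2 h; omega
      · have := List.count_pos_iff.2 h; omega
    have hdd : P₁.support.count x = 0 ∨ P₂.support.count x = 0 := by
      rcases Nat.eq_zero_or_pos (P₁.support.count x) with h | h
      · exact Or.inl h
      · exact Or.inr (List.count_eq_zero.2 (hdisj x (List.count_pos_iff.1 h)))
    rw [e0, e0']
    rcases eq_or_ne x b₁ with rfl | hx1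
    · rcases eq_or_ne x b₂ with rfl | hx2
      · exact absurd rfl hneb12
      · simp only [if_pos rfl, if_neg hx2] at e5 e6 ⊢
        omega
    · rcases eq_or_ne x b₂ with rfl | hx2
      · simp only [if_pos rfl, if_neg hx1] at e5 e6 ⊢
        omega
      · simp only [if_neg hx1, if_neg hx2] at e5 e6 ⊢
        omega
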